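/- Let C be a covering of a finite set U and M(C) the transversal matroid induced by C. For every x ∈ U, there exists a block K ∈ C such that cl_{M(C)}({x}) ⊆ K. -/

import Mathlib

open Set

/-- The rank function of a matroid: the maximum cardinality of an independent subset. -/
noncomputable def mrk {α : Type*} (M : Matroid α) (X : Set α) : ℕ :=
  sSup {n : ℕ | ∃ I ⊆ X, M.Indep I ∧ I.ncard = n}

/-- `M` is the transversal matroid (on ground set `univ`) induced by the family `𝒞` of
subsets: independent sets are exactly the partial transversals of `𝒞`. -/
def IsTransversalMatroidOf {α : Type*} (M : Matroid α) (𝒞 : Set (Set α)) : Prop :=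
  M.E = Set.univ ∧
    ∀ I : Set α, M.Indep I ↔
      ∃ f : α → Set α, Set.InjOn f I ∧ ∀ x ∈ I, f x ∈ 𝒞 ∧ x ∈ f x

/-- A hyperplane of a matroid on ground set `univ`: a flat of rank `r(U) - 1`. -/
def IsHyperplaneOf {α : Type*} (M : Matroid α) (H : Set α) : Prop :=
  M.IsFlat H ∧ mrk M H = mrk M Set.univ - 1

theorem closure_singleton_subset_block {α : Type*} [Fintype α]
    (𝒞 : Set (Set α)) (hne : ∅ ∉ 𝒞) (hcov : ⋃₀ 𝒞 = Set.univ)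
    (M : Matroid α) (hM : IsTransversalMatroidOf M 𝒞) (x : α) :
    ∃ K ∈ 𝒞, M.closure {x} ⊆ K := by
  classical
  obtain ⟨hE, hInd⟩ := hM
  -- x is in some block K
  obtain ⟨K, hK𝒞, hxK⟩ : ∃ K ∈ 𝒞, x ∈ K := by
    have : x ∈ ⋃₀ 𝒞 := by rw [hcov]; trivial
    simpa using this
  refine ⟨K, hK𝒞, ?_⟩
  have hx : M.Indep {x} := by
    rw [hInd]
    exact ⟨fun _ => K, Set.injOn_singleton _ _, by simp [hK𝒞, hxK]⟩
  intro y hy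
  by_contra hyK
  have hyx : y ≠ x := fun h => hyK (h ▸ hxK)
  obtain ⟨K', hK'𝒞, hyK'⟩ : ∃ K' ∈ 𝒞, y ∈ K' := by
    have : y ∈ ⋃₀ 𝒞 := by rw [hcov]; trivial
    simpa using this
  have hKK' : K ≠ K' := fun h => hyK (h ▸ hyK')
  have hind : M.Indep (insert y {x}) := by
    rw [hInd]
    refine ⟨fun z => if z = x then K else K', ?_, ?_⟩
    · intro a ha b hb hab
      simp only [mem_insert_iff, mem_singleton_iff] at ha hb
      rcases ha with ha | ha <;> rcases hb with hb | hb <;>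
        subst_vars <;> simp_all [hyx]
    · rintro z (rfl | rfl)
      · simp [hyx, hK'𝒞, hyK']
      · simp [hK𝒞, hxK]
  rw [hx.mem_closure_iff'] at hy
  exact hyx (by simpa using hy.2 hind)
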